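/- Let s be an infinite volume ground state of the Hamiltonian H on ℤ², and σ* any fixed reference configuration. Then for any square box Λ of side L and any configuration σ_Λ on Λ, |H_Λ(σ_Λ | s) - H_Λ(σ_Λ | σ*)| ≤ 2(J + J_c)|∂Λ|, where |∂Λ| = 4L is the boundary size, J_c = Σ_{y₁>0, y₂∈ℤ} y₁/(y₁²+y₂²)^{p/2}, and p > 4. Consequently H_Λ(σ*_Λ | σ*) + 4(J+J_c)|∂Λ| ≥ H_Λ(s_Λ | σ*). -/

import Mathlib

/-- Euclidean norm of a point of `ℤ²`. -/
noncomputable def zNorm (x : ℤ × ℤ) : ℝ := Real.sqrt ((x.1 : ℝ) ^ 2 + (x.2 : ℝ) ^ 2)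

/-- `J_c = Σ_{y₁ > 0, y₂ ∈ ℤ} y₁/(y₁² + y₂²)^{p/2}`. -/
noncomputable def Jcrit (p : ℝ) : ℝ :=
  ∑' y : ℤ × ℤ, if 0 < y.1 then (y.1 : ℝ) / ((y.1 : ℝ) ^ 2 + (y.2 : ℝ) ^ 2) ^ (p / 2) else 0

/-- `H_X(σ_X | s)`: relative energy of the configuration equal to `σ` on the finite set
`X` and to the boundary condition `s` outside `X`, for the Hamiltonian
`H(σ) = -J Σ_{⟨x,y⟩}(σₓσ_y - 1) + Σ_{{x,y}} (σₓσ_y - 1)/|x-y|^p`. -/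
noncomputable def energyBC (p J : ℝ) (X : Finset (ℤ × ℤ)) (σ s : ℤ × ℤ → ℤ) : ℝ :=
  -J * ((1 / 2) * ∑ x ∈ X, ∑ y ∈ X,
      (if zNorm (x - y) = 1 then ((σ x * σ y : ℤ) : ℝ) - 1 else 0))
  + (1 / 2) * ∑ x ∈ X, ∑ y ∈ X,
      (if x = y then 0 else (((σ x * σ y : ℤ) : ℝ) - 1) / zNorm (x - y) ^ p)
  - J * ∑ x ∈ X, ∑' y : {y : ℤ × ℤ // y ∉ X},
      (if zNorm (x - (y : ℤ × ℤ)) = 1 then ((σ x * s (y : ℤ × ℤ) : ℤ) : ℝ) - 1 else 0)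
  + ∑ x ∈ X, ∑' y : {y : ℤ × ℤ // y ∉ X},
      (((σ x * s (y : ℤ × ℤ) : ℤ) : ℝ) - 1) / zNorm (x - (y : ℤ × ℤ)) ^ p


lemma zNorm_nonneg (v : ℤ × ℤ) : 0 ≤ zNorm v := Real.sqrt_nonneg _

lemma abs_fst_le_zNorm (v : ℤ × ℤ) : |(v.1 : ℝ)| ≤ zNorm v := by
  rw [← Real.sqrt_sq_eq_abs]
  exact Real.sqrt_le_sqrt (by nlinarith [sq_nonneg (v.2 : ℝ)])

lemma abs_snd_le_zNorm (v : ℤ × ℤ) : |(v.2 : ℝ)| ≤ zNorm v := by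
  rw [← Real.sqrt_sq_eq_abs]
  exact Real.sqrt_le_sqrt (by nlinarith [sq_nonneg (v.1 : ℝ)])

lemma zNorm_neg (v : ℤ × ℤ) : zNorm (-v) = zNorm v := by simp [zNorm]

lemma zNorm_swap (v : ℤ × ℤ) : zNorm (v.2, v.1) = zNorm v := by simp [zNorm, add_comm]

lemma zNorm_pos {v : ℤ × ℤ} (hv : v ≠ 0) : 0 < zNorm v := by
  apply Real.sqrt_pos.2
  have : v.1 ≠ 0 ∨ v.2 ≠ 0 := by
    by_contra hc; push_neg at hc; exact hv (Prod.ext hc.1 hc.2)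
  rcases this with h | h
  · have h1 : (0:ℝ) < (v.1:ℝ)^2 := by positivity
    nlinarith [sq_nonneg (v.2:ℝ)]
  · have h1 : (0:ℝ) < (v.2:ℝ)^2 := by positivity
    nlinarith [sq_nonneg (v.1:ℝ)]

-- master summability
lemma summable_inv_zNorm {q : ℝ} (hq : 2 < q) :
    Summable (fun v : ℤ × ℤ => 1 / zNorm v ^ q) := by
  have h := EisensteinSeries.summable_one_div_norm_rpow hq
  have h2 : Summable (fun v : ℤ × ℤ => ‖(finTwoArrowEquiv ℤ).symm v‖ ^ (-q)) :=
    h.comp_injective (Equiv.injective _)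
  refine h2.of_nonneg_of_le (fun v => by
    rw [one_div]; exact inv_nonneg.2 (Real.rpow_nonneg (zNorm_nonneg v) q)) (fun v => ?_)
  by_cases hv : v = 0
  · subst hv
    have : zNorm 0 = 0 := by simp [zNorm]
    rw [this, Real.zero_rpow (by linarith : q ≠ 0), div_zero]
    exact Real.rpow_nonneg (norm_nonneg _) _
  · have h1 : ‖(finTwoArrowEquiv ℤ).symm v‖ ≤ zNorm v := by
      rw [EisensteinSeries.norm_eq_max_natAbs]
      simp only [finTwoArrowEquiv_symm_apply, Matrix.cons_val_zero, Matrix.cons_val_one,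
        Matrix.head_cons]
      rw [Nat.cast_max]
      apply max_le
      · rw [Nat.cast_natAbs, Int.cast_abs]; exact_mod_cast abs_fst_le_zNorm v
      · rw [Nat.cast_natAbs, Int.cast_abs]; exact_mod_cast abs_snd_le_zNorm v
    have h0 : 0 < ‖(finTwoArrowEquiv ℤ).symm v‖ := by
      simp only [norm_pos_iff]
      exact fun hc => hv (by simpa [Prod.ext_iff] using congrArg (finTwoArrowEquiv ℤ) hc)
    rw [Real.rpow_neg (le_of_lt h0), ← Real.inv_rpow (le_of_lt h0), div_eq_mul_inv, one_mul,
      ← Real.inv_rpow (zNorm_nonneg v)]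
    exact Real.rpow_le_rpow (inv_nonneg.2 (zNorm_nonneg v))
      (inv_anti₀ h0 h1) (by linarith)

lemma zNorm_rpow (v : ℤ × ℤ) (p : ℝ) :
    zNorm v ^ p = ((v.1 : ℝ) ^ 2 + (v.2 : ℝ) ^ 2) ^ (p / 2) := by
  have hS : (0:ℝ) ≤ (v.1 : ℝ) ^ 2 + (v.2 : ℝ) ^ 2 := by positivity
  rw [zNorm, Real.sqrt_eq_rpow, ← Real.rpow_mul hS]
  ring_nf

/-- the summand of `Jcrit`, rewritten with `zNorm`. -/
noncomputable def Gfun (p : ℝ) (y : ℤ × ℤ) : ℝ :=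
  if 0 < y.1 then (y.1 : ℝ) / zNorm y ^ p else 0

lemma Gfun_eq (p : ℝ) (y : ℤ × ℤ) :
    Gfun p y = if 0 < y.1 then (y.1 : ℝ) / ((y.1 : ℝ) ^ 2 + (y.2 : ℝ) ^ 2) ^ (p / 2) else 0 := by
  rw [Gfun, zNorm_rpow]

lemma Jcrit_eq (p : ℝ) : Jcrit p = ∑' y : ℤ × ℤ, Gfun p y := by
  rw [Jcrit]; exact (tsum_congr fun y => (Gfun_eq p y)).symm

lemma Gfun_nonneg (p : ℝ) (y : ℤ × ℤ) : 0 ≤ Gfun p y := by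
  rw [Gfun]; split
  · apply div_nonneg
    · exact_mod_cast le_of_lt (by assumption)
    · exact Real.rpow_nonneg (zNorm_nonneg y) p
  · exact le_refl _

lemma inv_z_nonneg (p : ℝ) (u : ℤ × ℤ) : (0:ℝ) ≤ 1 / zNorm u ^ p := by
  rw [one_div]; exact inv_nonneg.2 (Real.rpow_nonneg (zNorm_nonneg u) p)

lemma summable_Gfun {p : ℝ} (hp : 4 < p) : Summable (Gfun p) := by
  refine (summable_inv_zNorm (by linarith : (2:ℝ) < p - 1)).of_nonneg_of_le
    (Gfun_nonneg p) (fun y => ?_)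
  rw [Gfun]
  split
  · rename_i h
    have h1 : (1:ℝ) ≤ (y.1 : ℝ) := by exact_mod_cast h
    have h2 : (y.1 : ℝ) ≤ zNorm y := le_trans (le_abs_self _) (abs_fst_le_zNorm y)
    have hz : (0:ℝ) < zNorm y := lt_of_lt_of_le (by linarith) h2
    rw [div_le_div_iff₀ (Real.rpow_pos_of_pos hz p) (Real.rpow_pos_of_pos hz (p-1))]
    calc (y.1:ℝ) * zNorm y ^ (p-1) ≤ zNorm y * zNorm y ^ (p-1) := by
            apply mul_le_mul_of_nonneg_right h2 (Real.rpow_nonneg (le_of_lt hz) _)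
      _ = zNorm y ^ p := by
            rw [← Real.rpow_one_add' (le_of_lt hz) (by linarith)]; ring_nf
      _ ≤ 1 * zNorm y ^ p := by rw [one_mul]
  · exact inv_z_nonneg _ _

/-- tail sums -/
noncomputable def tailS (p : ℝ) (k : ℤ) : ℝ :=
  ∑' u : ℤ × ℤ, if k ≤ u.1 then 1 / zNorm u ^ p else 0

lemma summable_tail {p : ℝ} (hp : 4 < p) (k : ℤ) :
    Summable (fun u : ℤ × ℤ => if k ≤ u.1 then 1 / zNorm u ^ p else 0) := by
  refine (summable_inv_zNorm (by linarith : (2:ℝ) < p)).of_nonneg_of_le (fun u => ?_) (fun u => ?_)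
  · split
    · exact inv_z_nonneg _ _
    · exact le_refl _
  · split
    · exact le_refl _
    · exact inv_z_nonneg _ _

lemma tailS_nonneg {p : ℝ} (k : ℤ) : 0 ≤ tailS p k := by
  apply tsum_nonneg; intro u; split
  · exact inv_z_nonneg _ _
  · exact le_refl _

lemma sum_tailS_le {p : ℝ} (hp : 4 < p) (L : ℤ) :
    ∑ k ∈ Finset.Icc (1:ℤ) L, tailS p k ≤ ∑' y : ℤ × ℤ, Gfun p y := by
  simp only [tailS]
  rw [← Summable.tsum_finsetSum (fun k _ => summable_tail hp k)]
  refine Summable.tsum_le_tsum (fun u => ?_) ?_ (summable_Gfun hp)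
  · by_cases hu : 1 ≤ u.1
    · have hcard : ((Finset.Icc (1:ℤ) L).filter (fun k => k ≤ u.1)).card ≤ u.1.toNat := by
        calc _ ≤ (Finset.Icc (1:ℤ) u.1).card := by
                apply Finset.card_le_card
                intro k hk
                simp only [Finset.mem_filter, Finset.mem_Icc] at hk ⊢
                exact ⟨hk.1.1, hk.2⟩
          _ = u.1.toNat := by rw [Int.card_Icc]; omega
      have ht : (0:ℝ) ≤ 1 / zNorm u ^ p := inv_z_nonneg _ _
      calc ∑ k ∈ Finset.Icc (1:ℤ) L, (if k ≤ u.1 then 1 / zNorm u ^ p else 0)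
          = ∑ k ∈ (Finset.Icc (1:ℤ) L).filter (fun k => k ≤ u.1), 1 / zNorm u ^ p := by
            rw [Finset.sum_filter]
        _ = ((Finset.Icc (1:ℤ) L).filter (fun k => k ≤ u.1)).card * (1 / zNorm u ^ p) := by
            rw [Finset.sum_const, nsmul_eq_mul]
        _ ≤ (u.1 : ℝ) * (1 / zNorm u ^ p) := by
            apply mul_le_mul_of_nonneg_right _ ht
            have := hcard
            have : ((u.1.toNat : ℤ) : ℝ) = (u.1 : ℝ) := by norm_cast; omega
            calc (_ : ℝ) ≤ (u.1.toNat : ℝ) := by exact_mod_cast hcard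
              _ = (u.1 : ℝ) := by exact_mod_cast this
        _ = Gfun p u := by rw [Gfun, if_pos (by omega : 0 < u.1)]; rw [div_eq_mul_inv, div_eq_mul_inv]; ring
    · rw [Finset.sum_eq_zero, Gfun, if_neg (by omega)]
      intro k hk
      rw [if_neg]
      simp only [Finset.mem_Icc] at hk
      omega
  · exact summable_sum (fun k _ => summable_tail hp k)

section regions
variable (p : ℝ) (x : ℤ × ℤ) (c : ℤ)

lemma region1 : ∑' y : ℤ × ℤ, (if y.1 ≤ 0 then 1 / zNorm (x - y) ^ p else 0) = tailS p x.1 := by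
  rw [tailS, ← Equiv.tsum_eq (Equiv.subLeft x)]
  apply tsum_congr; intro u
  have h1 : (Equiv.subLeft x u).1 = x.1 - u.1 := rfl
  have h2 : x - Equiv.subLeft x u = u := by
    show x - (x - u) = u; ring
  rw [h1, h2]
  congr 1
  simp only [eq_iff_iff]
  omega

lemma region2 : ∑' y : ℤ × ℤ, (if c ≤ y.1 then 1 / zNorm (x - y) ^ p else 0)
    = tailS p (c - x.1) := by
  rw [tailS, ← Equiv.tsum_eq (Equiv.addRight x)]
  apply tsum_congr; intro u
  have h1 : (Equiv.addRight x u).1 = u.1 + x.1 := rfl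
  have h2 : x - Equiv.addRight x u = -u := by
    show x - (u + x) = -u; ring
  rw [h1, h2, zNorm_neg]
  congr 1
  simp only [eq_iff_iff]
  omega

lemma region3 : ∑' y : ℤ × ℤ, (if y.2 ≤ 0 then 1 / zNorm (x - y) ^ p else 0) = tailS p x.2 := by
  rw [tailS, ← Equiv.tsum_eq ((Equiv.prodComm ℤ ℤ).trans (Equiv.subLeft x))]
  apply tsum_congr; intro u
  have h1 : (((Equiv.prodComm ℤ ℤ).trans (Equiv.subLeft x)) u).2 = x.2 - u.1 := rfl
  have h2 : x - ((Equiv.prodComm ℤ ℤ).trans (Equiv.subLeft x)) u = (u.2, u.1) := by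
    show x - (x - (u.2, u.1)) = (u.2, u.1); ring
  rw [h1, h2, zNorm_swap]
  congr 1
  simp only [eq_iff_iff]
  omega

lemma region4 : ∑' y : ℤ × ℤ, (if c ≤ y.2 then 1 / zNorm (x - y) ^ p else 0)
    = tailS p (c - x.2) := by
  rw [tailS, ← Equiv.tsum_eq ((Equiv.prodComm ℤ ℤ).trans (Equiv.addRight x))]
  apply tsum_congr; intro u
  have h1 : (((Equiv.prodComm ℤ ℤ).trans (Equiv.addRight x)) u).2 = u.1 + x.2 := rfl
  have h2 : x - ((Equiv.prodComm ℤ ℤ).trans (Equiv.addRight x)) u = -(u.2, u.1) := by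
    show x - ((u.2, u.1) + x) = -(u.2, u.1); ring
  rw [h1, h2, zNorm_neg, zNorm_swap]
  congr 1
  simp only [eq_iff_iff]
  omega

end regions

lemma summable_subtype_inv {p : ℝ} (hp : 4 < p) (x : ℤ × ℤ) (Λ : Finset (ℤ × ℤ)) :
    Summable (fun y : {y : ℤ × ℤ // y ∉ Λ} => 1 / zNorm (x - (y : ℤ × ℤ)) ^ p) := by
  have h : Summable (fun y : ℤ × ℤ => 1 / zNorm (x - y) ^ p) := by
    have := (summable_inv_zNorm (by linarith : (2:ℝ) < p)).comp_injective
      (fun a b h => by simpa using sub_right_injective (G := ℤ × ℤ) h : Function.Injective (fun y : ℤ × ℤ => x - y))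
    exact this
  exact h.subtype _

lemma cover_bound {p : ℝ} (hp : 4 < p) (x : ℤ × ℤ) (L : ℤ)
    (Λ : Finset (ℤ × ℤ)) (hΛ : Λ = Finset.Icc ((1 : ℤ), (1 : ℤ)) ((L : ℤ), (L : ℤ))) :
    ∑' y : {y : ℤ × ℤ // y ∉ Λ}, 1 / zNorm (x - (y : ℤ × ℤ)) ^ p
      ≤ tailS p x.1 + tailS p (L + 1 - x.1) + tailS p x.2 + tailS p (L + 1 - x.2) := by
  have hmem : ∀ y : ℤ × ℤ, y ∈ Λ ↔ (1 ≤ y.1 ∧ y.1 ≤ L ∧ 1 ≤ y.2 ∧ y.2 ≤ L) := by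
    intro y
    rw [hΛ, Finset.mem_Icc, Prod.le_def, Prod.le_def]
    constructor
    · rintro ⟨⟨a, b⟩, ⟨c, d⟩⟩; exact ⟨a, c, b, d⟩
    · rintro ⟨a, b, c, d⟩; exact ⟨⟨a, c⟩, ⟨b, d⟩⟩
  have hsub : Summable (fun y : ℤ × ℤ => 1 / zNorm (x - y) ^ p) := by
    have := (summable_inv_zNorm (by linarith : (2:ℝ) < p)).comp_injective
      (fun a b h => by simpa using sub_right_injective (G := ℤ × ℤ) h : Function.Injective (fun y : ℤ × ℤ => x - y))
    exact this
  have hs1 : Summable (fun y : ℤ × ℤ => if y.1 ≤ 0 then 1 / zNorm (x - y) ^ p else 0) := by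
    refine hsub.of_nonneg_of_le (fun y => ?_) (fun y => ?_) <;> split
    · exact inv_z_nonneg _ _
    · exact le_refl _
    · exact le_refl _
    · exact inv_z_nonneg _ _
  have hs2 : Summable (fun y : ℤ × ℤ => if L + 1 ≤ y.1 then 1 / zNorm (x - y) ^ p else 0) := by
    refine hsub.of_nonneg_of_le (fun y => ?_) (fun y => ?_) <;> split
    · exact inv_z_nonneg _ _
    · exact le_refl _
    · exact le_refl _
    · exact inv_z_nonneg _ _
  have hs3 : Summable (fun y : ℤ × ℤ => if y.2 ≤ 0 then 1 / zNorm (x - y) ^ p else 0) := by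
    refine hsub.of_nonneg_of_le (fun y => ?_) (fun y => ?_) <;> split
    · exact inv_z_nonneg _ _
    · exact le_refl _
    · exact le_refl _
    · exact inv_z_nonneg _ _
  have hs4 : Summable (fun y : ℤ × ℤ => if L + 1 ≤ y.2 then 1 / zNorm (x - y) ^ p else 0) := by
    refine hsub.of_nonneg_of_le (fun y => ?_) (fun y => ?_) <;> split
    · exact inv_z_nonneg _ _
    · exact le_refl _
    · exact le_refl _
    · exact inv_z_nonneg _ _
  have hset : ∑' y : {y : ℤ × ℤ // y ∉ Λ}, 1 / zNorm (x - (y : ℤ × ℤ)) ^ p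
      = ∑' y : ℤ × ℤ, Set.indicator {y | y ∉ Λ} (fun y => 1 / zNorm (x - y) ^ p) y :=
    tsum_subtype {y | y ∉ Λ} (fun y => 1 / zNorm (x - y) ^ p)
  rw [hset]
  have key : ∑' y : ℤ × ℤ, Set.indicator {y | y ∉ Λ} (fun y => 1 / zNorm (x - y) ^ p) y
      ≤ ∑' y : ℤ × ℤ, ((if y.1 ≤ 0 then 1 / zNorm (x - y) ^ p else 0)
        + (if L + 1 ≤ y.1 then 1 / zNorm (x - y) ^ p else 0)
        + (if y.2 ≤ 0 then 1 / zNorm (x - y) ^ p else 0)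
        + (if L + 1 ≤ y.2 then 1 / zNorm (x - y) ^ p else 0)) := by
    refine Summable.tsum_le_tsum (fun y => ?_) (hsub.indicator _) (((hs1.add hs2).add hs3).add hs4)
    have n1 : (0:ℝ) ≤ (if y.1 ≤ 0 then 1 / zNorm (x - y) ^ p else 0) := by
      split; exacts [inv_z_nonneg _ _, le_refl _]
    have n2 : (0:ℝ) ≤ (if L + 1 ≤ y.1 then 1 / zNorm (x - y) ^ p else 0) := by
      split; exacts [inv_z_nonneg _ _, le_refl _]
    have n3 : (0:ℝ) ≤ (if y.2 ≤ 0 then 1 / zNorm (x - y) ^ p else 0) := by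
      split; exacts [inv_z_nonneg _ _, le_refl _]
    have n4 : (0:ℝ) ≤ (if L + 1 ≤ y.2 then 1 / zNorm (x - y) ^ p else 0) := by
      split; exacts [inv_z_nonneg _ _, le_refl _]
    by_cases hy : y ∈ Λ
    · rw [Set.indicator_of_notMem (by simpa using hy)]
      linarith
    · rw [Set.indicator_of_mem (by simpa using hy)]
      rw [hmem] at hy
      push_neg at hy
      rcases (by omega : y.1 ≤ 0 ∨ L + 1 ≤ y.1 ∨ y.2 ≤ 0 ∨ L + 1 ≤ y.2) with h | h | h | h
      · rw [if_pos h] at n1 ⊢; linarith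
      · rw [if_pos h] at n2 ⊢; linarith
      · rw [if_pos h] at n3 ⊢; linarith
      · rw [if_pos h] at n4 ⊢; linarith
  refine key.trans (le_of_eq ?_)
  rw [Summable.tsum_add ((hs1.add hs2).add hs3) hs4, Summable.tsum_add (hs1.add hs2) hs3, Summable.tsum_add hs1 hs2]
  rw [region1, region2, region3, region4]

lemma sum_reflect (p : ℝ) (L : ℤ) :
    ∑ a ∈ Finset.Icc (1:ℤ) L, tailS p (L + 1 - a) = ∑ k ∈ Finset.Icc (1:ℤ) L, tailS p k := by
  refine Finset.sum_nbij' (fun a => L + 1 - a) (fun k => L + 1 - k) ?_ ?_ ?_ ?_ ?_ <;>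
    simp only [Finset.mem_Icc] <;> intros
  · omega
  · omega
  · omega
  · omega
  · trivial

lemma main_lr {p : ℝ} (hp : 4 < p) (L : ℕ) (hL : 0 < L)
    (Λ : Finset (ℤ × ℤ)) (hΛ : Λ = Finset.Icc ((1 : ℤ), (1 : ℤ)) ((L : ℤ), (L : ℤ))) :
    ∑ x ∈ Λ, ∑' y : {y : ℤ × ℤ // y ∉ Λ}, 1 / zNorm (x - (y : ℤ × ℤ)) ^ p
      ≤ (∑' y : ℤ × ℤ, Gfun p y) * (4 * L) := by
  have hprod : Λ = Finset.Icc (1:ℤ) (L:ℤ) ×ˢ Finset.Icc (1:ℤ) (L:ℤ) := by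
    rw [hΛ, Finset.Icc_prod_def]
  have hcard : (Finset.Icc (1:ℤ) (L:ℤ)).card = L := by
    rw [Int.card_Icc]; omega
  have step1 : ∑ x ∈ Λ, ∑' y : {y : ℤ × ℤ // y ∉ Λ}, 1 / zNorm (x - (y : ℤ × ℤ)) ^ p
      ≤ ∑ x ∈ Λ, (tailS p x.1 + tailS p ((L:ℤ) + 1 - x.1) + tailS p x.2
          + tailS p ((L:ℤ) + 1 - x.2)) :=
    Finset.sum_le_sum (fun x _ => cover_bound hp x L Λ hΛ)
  refine step1.trans ?_
  have e1 : ∑ x ∈ Λ, tailS p x.1 = (L:ℝ) * ∑ a ∈ Finset.Icc (1:ℤ) (L:ℤ), tailS p a := by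
    rw [hprod, Finset.sum_product]
    simp only [Finset.sum_const, hcard, nsmul_eq_mul]
    rw [← Finset.mul_sum]
  have e2 : ∑ x ∈ Λ, tailS p ((L:ℤ) + 1 - x.1)
      = (L:ℝ) * ∑ a ∈ Finset.Icc (1:ℤ) (L:ℤ), tailS p a := by
    rw [hprod, Finset.sum_product]
    simp only [Finset.sum_const, hcard, nsmul_eq_mul]
    rw [← Finset.mul_sum, sum_reflect]
  have e3 : ∑ x ∈ Λ, tailS p x.2 = (L:ℝ) * ∑ a ∈ Finset.Icc (1:ℤ) (L:ℤ), tailS p a := by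
    rw [hprod, Finset.sum_product]
    rw [Finset.sum_comm]
    simp only [Finset.sum_const, hcard, nsmul_eq_mul]
    rw [← Finset.mul_sum]
  have e4 : ∑ x ∈ Λ, tailS p ((L:ℤ) + 1 - x.2)
      = (L:ℝ) * ∑ a ∈ Finset.Icc (1:ℤ) (L:ℤ), tailS p a := by
    rw [hprod, Finset.sum_product]
    rw [Finset.sum_comm]
    simp only [Finset.sum_const, hcard, nsmul_eq_mul]
    rw [← Finset.mul_sum, sum_reflect]
  rw [Finset.sum_add_distrib, Finset.sum_add_distrib, Finset.sum_add_distrib, e1, e2, e3, e4]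
  have hsum := sum_tailS_le hp (L:ℤ)
  have hLpos : (0:ℝ) ≤ (L:ℝ) := by positivity
  nlinarith [hsum, hLpos]

lemma zNorm_eq_one_iff (v : ℤ × ℤ) :
    zNorm v = 1 ↔ v = (1, 0) ∨ v = (-1, 0) ∨ v = (0, 1) ∨ v = (0, -1) := by
  constructor
  · intro h
    have h2 : ((v.1 : ℝ) ^ 2 + (v.2 : ℝ) ^ 2) = 1 := by
      have := congrArg (fun t => t ^ 2) h
      simpa [zNorm, Real.sq_sqrt (by positivity : (0:ℝ) ≤ (v.1:ℝ)^2 + (v.2:ℝ)^2)] using this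
    have h3 : v.1 ^ 2 + v.2 ^ 2 = 1 := by exact_mod_cast h2
    have ha : v.1 ^ 2 ≤ 1 := by nlinarith [sq_nonneg v.2]
    have hb : v.2 ^ 2 ≤ 1 := by nlinarith [sq_nonneg v.1]
    have ha1 : -1 ≤ v.1 ∧ v.1 ≤ 1 := by constructor <;> nlinarith
    have hb1 : -1 ≤ v.2 ∧ v.2 ≤ 1 := by constructor <;> nlinarith
    have : (v.1 = 1 ∧ v.2 = 0) ∨ (v.1 = -1 ∧ v.2 = 0) ∨ (v.1 = 0 ∧ v.2 = 1)
        ∨ (v.1 = 0 ∧ v.2 = -1) := by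
      rcases ha1 with ⟨a1, a2⟩; rcases hb1 with ⟨b1, b2⟩
      interval_cases h1 : v.1 <;> interval_cases h2 : v.2 <;> omega
    rcases this with ⟨h1, h2⟩ | ⟨h1, h2⟩ | ⟨h1, h2⟩ | ⟨h1, h2⟩
    · exact Or.inl (Prod.ext h1 h2)
    · exact Or.inr (Or.inl (Prod.ext h1 h2))
    · exact Or.inr (Or.inr (Or.inl (Prod.ext h1 h2)))
    · exact Or.inr (Or.inr (Or.inr (Prod.ext h1 h2)))
  · rintro (h | h | h | h) <;> subst h <;> simp [zNorm] <;> norm_num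

lemma tsum_pair_ite (pt : ℤ × ℤ) (P : Prop) [Decidable P] :
    ∑' y : ℤ × ℤ, (if y = pt ∧ P then (2:ℝ) else 0) = if P then 2 else 0 := by
  by_cases hP : P
  · simp only [hP, and_true, if_true]
    simpa using tsum_ite_eq pt (2:ℝ)
  · simp [hP]

lemma summable_pair_ite (pt : ℤ × ℤ) (P : Prop) [Decidable P] :
    Summable (fun y : ℤ × ℤ => if y = pt ∧ P then (2:ℝ) else 0) := by
  apply summable_of_ne_finset_zero (s := {pt})
  intro y hy
  simp only [Finset.mem_singleton] at hy
  rw [if_neg]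
  exact fun h => hy h.1

lemma nn_bound {L : ℤ} (hL1 : 1 ≤ L) (Λ : Finset (ℤ × ℤ))
    (hΛ : Λ = Finset.Icc ((1 : ℤ), (1 : ℤ)) ((L : ℤ), (L : ℤ)))
    (x : ℤ × ℤ) (hx : x ∈ Λ) :
    ∑' y : {y : ℤ × ℤ // y ∉ Λ}, (if zNorm (x - (y : ℤ × ℤ)) = 1 then (2:ℝ) else 0)
      ≤ (if x.1 = 1 then 2 else 0) + (if x.1 = L then 2 else 0)
        + (if x.2 = 1 then 2 else 0) + (if x.2 = L then 2 else 0) := by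
  have hmem : ∀ y : ℤ × ℤ, y ∈ Λ ↔ (1 ≤ y.1 ∧ y.1 ≤ L ∧ 1 ≤ y.2 ∧ y.2 ≤ L) := by
    intro y
    rw [hΛ, Finset.mem_Icc, Prod.le_def, Prod.le_def]
    constructor
    · rintro ⟨⟨a, b⟩, ⟨c, d⟩⟩; exact ⟨a, c, b, d⟩
    · rintro ⟨a, b, c, d⟩; exact ⟨⟨a, c⟩, ⟨b, d⟩⟩
  have hxm := (hmem x).1 hx
  set p1 : ℤ × ℤ := (x.1 - 1, x.2) with hp1
  set p2 : ℤ × ℤ := (x.1 + 1, x.2) with hp2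
  set p3 : ℤ × ℤ := (x.1, x.2 - 1) with hp3
  set p4 : ℤ × ℤ := (x.1, x.2 + 1) with hp4
  have hh : Summable (fun y : ℤ × ℤ => if zNorm (x - y) = 1 then (2:ℝ) else 0) := by
    apply summable_of_ne_finset_zero (s := {p1, p2, p3, p4})
    intro y hy
    rw [if_neg]
    intro hz
    rcases (zNorm_eq_one_iff _).1 hz with h | h | h | h <;>
      [ (have : y = p1 := by
          have h1 := congrArg Prod.fst h; have h2 := congrArg Prod.snd h
          simp only [Prod.fst_sub, Prod.snd_sub] at h1 h2
          apply Prod.ext <;> simp [hp1] <;> omega);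
        (have : y = p2 := by
          have h1 := congrArg Prod.fst h; have h2 := congrArg Prod.snd h
          simp only [Prod.fst_sub, Prod.snd_sub] at h1 h2
          apply Prod.ext <;> simp [hp2] <;> omega);
        (have : y = p3 := by
          have h1 := congrArg Prod.fst h; have h2 := congrArg Prod.snd h
          simp only [Prod.fst_sub, Prod.snd_sub] at h1 h2
          apply Prod.ext <;> simp [hp3] <;> omega);
        (have : y = p4 := by
          have h1 := congrArg Prod.fst h; have h2 := congrArg Prod.snd h
          simp only [Prod.fst_sub, Prod.snd_sub] at h1 h2
          apply Prod.ext <;> simp [hp4] <;> omega)] <;>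
      · subst this
        simp at hy
  have hset : ∑' y : {y : ℤ × ℤ // y ∉ Λ}, (if zNorm (x - (y : ℤ × ℤ)) = 1 then (2:ℝ) else 0)
      = ∑' y : ℤ × ℤ, Set.indicator {y | y ∉ Λ}
          (fun y => if zNorm (x - y) = 1 then (2:ℝ) else 0) y :=
    tsum_subtype {y : ℤ × ℤ | y ∉ Λ} (fun y => if zNorm (x - y) = 1 then (2:ℝ) else 0)
  rw [hset]
  have key : ∑' y : ℤ × ℤ, Set.indicator {y | y ∉ Λ}
        (fun y => if zNorm (x - y) = 1 then (2:ℝ) else 0) y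
      ≤ ∑' y : ℤ × ℤ, ((if y = p1 ∧ x.1 = 1 then (2:ℝ) else 0)
        + (if y = p2 ∧ x.1 = L then (2:ℝ) else 0)
        + (if y = p3 ∧ x.2 = 1 then (2:ℝ) else 0)
        + (if y = p4 ∧ x.2 = L then (2:ℝ) else 0)) := by
    refine Summable.tsum_le_tsum (fun y => ?_) (hh.indicator _)
      ((((summable_pair_ite p1 _).add (summable_pair_ite p2 _)).add
        (summable_pair_ite p3 _)).add (summable_pair_ite p4 _))
    have n1 : (0:ℝ) ≤ (if y = p1 ∧ x.1 = 1 then (2:ℝ) else 0) := by split <;> norm_num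
    have n2 : (0:ℝ) ≤ (if y = p2 ∧ x.1 = L then (2:ℝ) else 0) := by split <;> norm_num
    have n3 : (0:ℝ) ≤ (if y = p3 ∧ x.2 = 1 then (2:ℝ) else 0) := by split <;> norm_num
    have n4 : (0:ℝ) ≤ (if y = p4 ∧ x.2 = L then (2:ℝ) else 0) := by split <;> norm_num
    by_cases hy : y ∈ Λ
    · rw [Set.indicator_of_notMem (by simpa using hy)]
      linarith
    · rw [Set.indicator_of_mem (by simpa using hy)]
      by_cases hz : zNorm (x - y) = 1
      · rw [if_pos hz]
        have hyn : ¬ (1 ≤ y.1 ∧ y.1 ≤ L ∧ 1 ≤ y.2 ∧ y.2 ≤ L) := (fun h => hy ((hmem y).2 h))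
        push_neg at hyn
        rcases (zNorm_eq_one_iff _).1 hz with h | h | h | h
        all_goals (
          have h1 := congrArg Prod.fst h; have h2 := congrArg Prod.snd h
          simp only [Prod.fst_sub, Prod.snd_sub] at h1 h2)
        · have hy1 : y = p1 := by apply Prod.ext <;> simp [hp1] <;> omega
          have hc : x.1 = 1 := by
            subst hy1; simp [hp1] at hyn; omega
          rw [if_pos (show y = p1 ∧ x.1 = 1 from ⟨hy1, hc⟩)] at n1 ⊢; linarith
        · have hy1 : y = p2 := by apply Prod.ext <;> simp [hp2] <;> omega
          have hc : x.1 = L := by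
            subst hy1; simp [hp2] at hyn; omega
          rw [if_pos (show y = p2 ∧ x.1 = L from ⟨hy1, hc⟩)] at n2 ⊢; linarith
        · have hy1 : y = p3 := by apply Prod.ext <;> simp [hp3] <;> omega
          have hc : x.2 = 1 := by
            subst hy1; simp [hp3] at hyn; omega
          rw [if_pos (show y = p3 ∧ x.2 = 1 from ⟨hy1, hc⟩)] at n3 ⊢; linarith
        · have hy1 : y = p4 := by apply Prod.ext <;> simp [hp4] <;> omega
          have hc : x.2 = L := by
            subst hy1; simp [hp4] at hyn; omega
          rw [if_pos (show y = p4 ∧ x.2 = L from ⟨hy1, hc⟩)] at n4 ⊢; linarith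
      · rw [if_neg hz]; linarith
  refine key.trans (le_of_eq ?_)
  rw [Summable.tsum_add (((summable_pair_ite p1 _).add (summable_pair_ite p2 _)).add
        (summable_pair_ite p3 _)) (summable_pair_ite p4 _),
      Summable.tsum_add ((summable_pair_ite p1 _).add (summable_pair_ite p2 _)) (summable_pair_ite p3 _),
      Summable.tsum_add (summable_pair_ite p1 _) (summable_pair_ite p2 _),
      tsum_pair_ite, tsum_pair_ite, tsum_pair_ite, tsum_pair_ite]
lemma sum_delta {L : ℕ} (hL : 0 < L) (Λ : Finset (ℤ × ℤ))
    (hΛ : Λ = Finset.Icc ((1 : ℤ), (1 : ℤ)) ((L : ℤ), (L : ℤ))) :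
    ∑ x ∈ Λ, ((if x.1 = 1 then (2:ℝ) else 0) + (if x.1 = (L:ℤ) then 2 else 0)
      + (if x.2 = 1 then 2 else 0) + (if x.2 = (L:ℤ) then 2 else 0)) = 2 * (4 * (L:ℝ)) := by
  have hprod : Λ = Finset.Icc (1:ℤ) (L:ℤ) ×ˢ Finset.Icc (1:ℤ) (L:ℤ) := by
    rw [hΛ, Finset.Icc_prod_def]
  have hcard : (Finset.Icc (1:ℤ) (L:ℤ)).card = L := by rw [Int.card_Icc]; omega
  have h1m : (1:ℤ) ∈ Finset.Icc (1:ℤ) (L:ℤ) := by simp; omega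
  have hLm : (L:ℤ) ∈ Finset.Icc (1:ℤ) (L:ℤ) := by simp; omega
  have efst : ∀ c : ℤ, c ∈ Finset.Icc (1:ℤ) (L:ℤ) →
      ∑ x ∈ Λ, (if x.1 = c then (2:ℝ) else 0) = 2 * (L:ℝ) := by
    intro c hc
    rw [hprod, Finset.sum_product]
    have : ∀ a : ℤ, ∑ _b ∈ Finset.Icc (1:ℤ) (L:ℤ), (if a = c then (2:ℝ) else 0)
        = if a = c then 2 * (L:ℝ) else 0 := by
      intro a
      rw [Finset.sum_const, hcard, nsmul_eq_mul]
      split <;> ring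
    rw [Finset.sum_congr rfl (fun a _ => this a), Finset.sum_ite_eq' _ c, if_pos hc]
  have esnd : ∀ c : ℤ, c ∈ Finset.Icc (1:ℤ) (L:ℤ) →
      ∑ x ∈ Λ, (if x.2 = c then (2:ℝ) else 0) = 2 * (L:ℝ) := by
    intro c hc
    rw [hprod, Finset.sum_product]
    have : ∀ a : ℤ, ∑ b ∈ Finset.Icc (1:ℤ) (L:ℤ), (if b = c then (2:ℝ) else 0)
        = 2 := by
      intro a
      rw [Finset.sum_ite_eq' _ c, if_pos hc]
    rw [Finset.sum_congr rfl (fun a _ => this a), Finset.sum_const, hcard, nsmul_eq_mul]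
    ring
  rw [Finset.sum_add_distrib, Finset.sum_add_distrib, Finset.sum_add_distrib,
    efst 1 h1m, efst (L:ℤ) hLm, esnd 1 h1m, esnd (L:ℤ) hLm]
  ring

lemma summable_nn_subtype (x : ℤ × ℤ) (Λ : Finset (ℤ × ℤ)) (g : ℤ × ℤ → ℝ) :
    Summable (fun y : {y : ℤ × ℤ // y ∉ Λ} =>
      if zNorm (x - (y : ℤ × ℤ)) = 1 then g (y : ℤ × ℤ) else 0) := by
  have hfull : Summable (fun y : ℤ × ℤ => if zNorm (x - y) = 1 then g y else 0) := by
    apply summable_of_ne_finset_zero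
      (s := {(x.1 - 1, x.2), (x.1 + 1, x.2), (x.1, x.2 - 1), (x.1, x.2 + 1)})
    intro y hy
    rw [if_neg]
    intro hz
    simp only [Finset.mem_insert, Finset.mem_singleton] at hy
    push_neg at hy
    rcases (zNorm_eq_one_iff _).1 hz with h | h | h | h <;>
      (have h1 := congrArg Prod.fst h; have h2 := congrArg Prod.snd h;
       simp only [Prod.fst_sub, Prod.snd_sub] at h1 h2)
    · exact hy.1 (by apply Prod.ext <;> simp <;> omega)
    · exact hy.2.1 (by apply Prod.ext <;> simp <;> omega)
    · exact hy.2.2.1 (by apply Prod.ext <;> simp <;> omega)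
    · exact hy.2.2.2 (by apply Prod.ext <;> simp <;> omega)
  exact hfull.subtype _

lemma abs_tsum_le_tsum {ι : Type*} (f g : ι → ℝ) (hg : Summable g) (h : ∀ i, |f i| ≤ g i) :
    |∑' i, f i| ≤ ∑' i, g i := by
  have habs : Summable (fun i => ‖f i‖) := by
    refine hg.of_nonneg_of_le (fun i => norm_nonneg _) (fun i => ?_)
    rw [Real.norm_eq_abs]; exact h i
  have h1 : ‖∑' i, f i‖ ≤ ∑' i, ‖f i‖ := norm_tsum_le_tsum_norm habs
  rw [Real.norm_eq_abs] at h1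
  refine h1.trans (Summable.tsum_le_tsum (fun i => ?_) habs hg)
  rw [Real.norm_eq_abs]; exact h i

lemma spin_prod (σ t : ℤ × ℤ → ℤ) (hσ : ∀ x, σ x = 1 ∨ σ x = -1)
    (ht : ∀ x, t x = 1 ∨ t x = -1) (x y : ℤ × ℤ) :
    ((σ x * t y : ℤ) : ℝ) = 1 ∨ ((σ x * t y : ℤ) : ℝ) = -1 := by
  rcases hσ x with h | h <;> rcases ht y with h' | h' <;> rw [h, h'] <;> norm_num

lemma diff_bound (p J : ℝ) (hp : 4 < p) (hJ : 0 < J)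
    (s σstar σ : ℤ × ℤ → ℤ)
    (hs : ∀ x, s x = 1 ∨ s x = -1) (hσstar : ∀ x, σstar x = 1 ∨ σstar x = -1)
    (hσ : ∀ x, σ x = 1 ∨ σ x = -1)
    (L : ℕ) (hL : 0 < L)
    (Λ : Finset (ℤ × ℤ)) (hΛ : Λ = Finset.Icc ((1 : ℤ), (1 : ℤ)) ((L : ℤ), (L : ℤ))) :
    |energyBC p J Λ σ s - energyBC p J Λ σ σstar| ≤ 2 * (J + Jcrit p) * (4 * (L : ℝ)) := by
  classical
  have hL1 : (1 : ℤ) ≤ (L : ℤ) := by exact_mod_cast hL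
  -- summability facts
  have hsA : ∀ (t : ℤ × ℤ → ℤ) (x : ℤ × ℤ), Summable (fun y : {y : ℤ × ℤ // y ∉ Λ} =>
      if zNorm (x - (y : ℤ × ℤ)) = 1 then ((σ x * t (y : ℤ × ℤ) : ℤ) : ℝ) - 1 else 0) :=
    fun t x => summable_nn_subtype x Λ (fun y => ((σ x * t y : ℤ) : ℝ) - 1)
  have hsB : ∀ (t : ℤ × ℤ → ℤ), (∀ z, t z = 1 ∨ t z = -1) → ∀ (x : ℤ × ℤ),
      Summable (fun y : {y : ℤ × ℤ // y ∉ Λ} =>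
        (((σ x * t (y : ℤ × ℤ) : ℤ) : ℝ) - 1) / zNorm (x - (y : ℤ × ℤ)) ^ p) := by
    intro t ht x
    apply Summable.of_norm_bounded ((summable_subtype_inv hp x Λ).mul_left 2)
    intro y
    rcases spin_prod σ t hσ ht x (y : ℤ × ℤ) with h | h <;>
      rw [Real.norm_eq_abs, abs_div, abs_of_nonneg (Real.rpow_nonneg (zNorm_nonneg _) p), h,
        div_eq_mul_one_div] <;>
    · have h2 : |(1:ℝ) - 1| ≤ 2 ∨ |(-1:ℝ) - 1| ≤ 2 := by norm_num
      apply mul_le_mul_of_nonneg_right _ (inv_z_nonneg p _)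
      norm_num
  -- split the energy difference
  have hsplit : energyBC p J Λ σ s - energyBC p J Λ σ σstar
      = -J * (∑ x ∈ Λ, ((∑' y : {y : ℤ × ℤ // y ∉ Λ},
            (if zNorm (x - (y : ℤ × ℤ)) = 1 then ((σ x * s (y : ℤ × ℤ) : ℤ) : ℝ) - 1 else 0))
          - ∑' y : {y : ℤ × ℤ // y ∉ Λ},
            (if zNorm (x - (y : ℤ × ℤ)) = 1 then ((σ x * σstar (y : ℤ × ℤ) : ℤ) : ℝ) - 1 else 0)))
        + ∑ x ∈ Λ, ((∑' y : {y : ℤ × ℤ // y ∉ Λ},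
            (((σ x * s (y : ℤ × ℤ) : ℤ) : ℝ) - 1) / zNorm (x - (y : ℤ × ℤ)) ^ p)
          - ∑' y : {y : ℤ × ℤ // y ∉ Λ},
            (((σ x * σstar (y : ℤ × ℤ) : ℤ) : ℝ) - 1) / zNorm (x - (y : ℤ × ℤ)) ^ p) := by
    simp only [energyBC]
    rw [Finset.sum_sub_distrib, Finset.sum_sub_distrib]
    ring
  rw [hsplit]
  -- bound the nearest-neighbour part
  have hA : |∑ x ∈ Λ, ((∑' y : {y : ℤ × ℤ // y ∉ Λ},
        (if zNorm (x - (y : ℤ × ℤ)) = 1 then ((σ x * s (y : ℤ × ℤ) : ℤ) : ℝ) - 1 else 0))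
      - ∑' y : {y : ℤ × ℤ // y ∉ Λ},
        (if zNorm (x - (y : ℤ × ℤ)) = 1 then ((σ x * σstar (y : ℤ × ℤ) : ℤ) : ℝ) - 1 else 0))|
      ≤ 2 * (4 * (L : ℝ)) := by
    refine (Finset.abs_sum_le_sum_abs _ _).trans ?_
    rw [← sum_delta hL Λ hΛ]
    refine Finset.sum_le_sum (fun x hx => ?_)
    rw [← Summable.tsum_sub (hsA s x) (hsA σstar x)]
    refine (abs_tsum_le_tsum _
      (fun y : {y : ℤ × ℤ // y ∉ Λ} => if zNorm (x - (y : ℤ × ℤ)) = 1 then (2:ℝ) else 0)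
      (summable_nn_subtype x Λ (fun _ => (2:ℝ))) (fun y => ?_)).trans (nn_bound hL1 Λ hΛ x hx)
    show |(if zNorm (x - (y : ℤ × ℤ)) = 1 then ((σ x * s (y : ℤ × ℤ) : ℤ) : ℝ) - 1 else 0)
          - (if zNorm (x - (y : ℤ × ℤ)) = 1 then ((σ x * σstar (y : ℤ × ℤ) : ℤ) : ℝ) - 1 else 0)|
        ≤ (if zNorm (x - (y : ℤ × ℤ)) = 1 then (2:ℝ) else 0)
    by_cases hc : zNorm (x - (y : ℤ × ℤ)) = 1
    · rw [if_pos hc, if_pos hc, if_pos hc]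
      rcases spin_prod σ s hσ hs x (y : ℤ × ℤ) with h | h <;>
        rcases spin_prod σ σstar hσ hσstar x (y : ℤ × ℤ) with h' | h' <;>
        rw [h, h'] <;> norm_num
    · rw [if_neg hc, if_neg hc, if_neg hc]; norm_num
  -- bound the long-range part
  have hB : |∑ x ∈ Λ, ((∑' y : {y : ℤ × ℤ // y ∉ Λ},
        (((σ x * s (y : ℤ × ℤ) : ℤ) : ℝ) - 1) / zNorm (x - (y : ℤ × ℤ)) ^ p)
      - ∑' y : {y : ℤ × ℤ // y ∉ Λ},
        (((σ x * σstar (y : ℤ × ℤ) : ℤ) : ℝ) - 1) / zNorm (x - (y : ℤ × ℤ)) ^ p)|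
      ≤ 2 * ((∑' y : ℤ × ℤ, Gfun p y) * (4 * (L : ℝ))) := by
    refine (Finset.abs_sum_le_sum_abs _ _).trans ?_
    have step : ∀ x ∈ Λ, |(∑' y : {y : ℤ × ℤ // y ∉ Λ},
          (((σ x * s (y : ℤ × ℤ) : ℤ) : ℝ) - 1) / zNorm (x - (y : ℤ × ℤ)) ^ p)
        - ∑' y : {y : ℤ × ℤ // y ∉ Λ},
          (((σ x * σstar (y : ℤ × ℤ) : ℤ) : ℝ) - 1) / zNorm (x - (y : ℤ × ℤ)) ^ p|
        ≤ 2 * ∑' y : {y : ℤ × ℤ // y ∉ Λ}, 1 / zNorm (x - (y : ℤ × ℤ)) ^ p := by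
      intro x hx
      rw [← Summable.tsum_sub (hsB s hs x) (hsB σstar hσstar x)]
      have hpt : ∀ y : {y : ℤ × ℤ // y ∉ Λ},
          |(((σ x * s (y : ℤ × ℤ) : ℤ) : ℝ) - 1) / zNorm (x - (y : ℤ × ℤ)) ^ p
            - (((σ x * σstar (y : ℤ × ℤ) : ℤ) : ℝ) - 1) / zNorm (x - (y : ℤ × ℤ)) ^ p|
          ≤ 2 * (1 / zNorm (x - (y : ℤ × ℤ)) ^ p) := by
        intro y
        have heq : (((σ x * s (y : ℤ × ℤ) : ℤ) : ℝ) - 1) / zNorm (x - (y : ℤ × ℤ)) ^ p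
            - (((σ x * σstar (y : ℤ × ℤ) : ℤ) : ℝ) - 1) / zNorm (x - (y : ℤ × ℤ)) ^ p
            = (((σ x * s (y : ℤ × ℤ) : ℤ) : ℝ) - ((σ x * σstar (y : ℤ × ℤ) : ℤ) : ℝ))
              / zNorm (x - (y : ℤ × ℤ)) ^ p := by ring
        rw [heq, abs_div, abs_of_nonneg (Real.rpow_nonneg (zNorm_nonneg _) p),
          div_eq_mul_one_div]
        apply mul_le_mul_of_nonneg_right _ (inv_z_nonneg p _)
        rcases spin_prod σ s hσ hs x (y : ℤ × ℤ) with h | h <;>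
          rcases spin_prod σ σstar hσ hσstar x (y : ℤ × ℤ) with h' | h' <;>
          rw [h, h'] <;> norm_num
      calc _ ≤ ∑' y : {y : ℤ × ℤ // y ∉ Λ}, 2 * (1 / zNorm (x - (y : ℤ × ℤ)) ^ p) :=
            abs_tsum_le_tsum _ _ ((summable_subtype_inv hp x Λ).mul_left 2) hpt
        _ = 2 * ∑' y : {y : ℤ × ℤ // y ∉ Λ}, 1 / zNorm (x - (y : ℤ × ℤ)) ^ p := tsum_mul_left
    calc ∑ x ∈ Λ, |(∑' y : {y : ℤ × ℤ // y ∉ Λ},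
          (((σ x * s (y : ℤ × ℤ) : ℤ) : ℝ) - 1) / zNorm (x - (y : ℤ × ℤ)) ^ p)
        - ∑' y : {y : ℤ × ℤ // y ∉ Λ},
          (((σ x * σstar (y : ℤ × ℤ) : ℤ) : ℝ) - 1) / zNorm (x - (y : ℤ × ℤ)) ^ p|
        ≤ ∑ x ∈ Λ, 2 * ∑' y : {y : ℤ × ℤ // y ∉ Λ}, 1 / zNorm (x - (y : ℤ × ℤ)) ^ p :=
          Finset.sum_le_sum step
      _ = 2 * ∑ x ∈ Λ, ∑' y : {y : ℤ × ℤ // y ∉ Λ}, 1 / zNorm (x - (y : ℤ × ℤ)) ^ p := by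
          rw [Finset.mul_sum]
      _ ≤ 2 * ((∑' y : ℤ × ℤ, Gfun p y) * (4 * (L : ℝ))) := by
          have := main_lr hp L hL Λ hΛ
          linarith
  calc |(-J) * _ + _| ≤ |(-J) * _| + |_| := abs_add_le _ _
    _ = J * _ + _ := by rw [abs_mul, abs_neg, abs_of_pos hJ]
    _ ≤ J * (2 * (4 * (L : ℝ))) + 2 * ((∑' y : ℤ × ℤ, Gfun p y) * (4 * (L : ℝ))) := by
        have := mul_le_mul_of_nonneg_left hA (le_of_lt hJ)
        linarith [hB, this]
    _ = 2 * (J + Jcrit p) * (4 * (L : ℝ)) := by rw [Jcrit_eq]; ring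

/-- changing the boundary condition from a ground state `s` to a reference
configuration `σ*` changes the energy in a box `Λ` of side `L` by at most
`2(J + J_c)|∂Λ|` with `|∂Λ| = 4L`; consequently
`H_Λ(σ*_Λ | σ*) + 4(J + J_c)|∂Λ| ≥ H_Λ(s_Λ | σ*)`. -/
theorem boundary_condition_change (p J : ℝ) (hp : 4 < p) (hJ : 0 < J)
    (s σstar : ℤ × ℤ → ℤ)
    (hs : ∀ x, s x = 1 ∨ s x = -1) (hσstar : ∀ x, σstar x = 1 ∨ σstar x = -1)
    (hground : ∀ (X : Finset (ℤ × ℤ)) (σ : ℤ × ℤ → ℤ), (∀ x, σ x = 1 ∨ σ x = -1) →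
        energyBC p J X s s ≤ energyBC p J X σ s)
    (L : ℕ) (hL : 0 < L)
    (Λ : Finset (ℤ × ℤ)) (hΛ : Λ = Finset.Icc ((1 : ℤ), (1 : ℤ)) ((L : ℤ), (L : ℤ))) :
    (∀ σ : ℤ × ℤ → ℤ, (∀ x, σ x = 1 ∨ σ x = -1) →
        |energyBC p J Λ σ s - energyBC p J Λ σ σstar| ≤ 2 * (J + Jcrit p) * (4 * (L : ℝ))) ∧
    energyBC p J Λ s σstar
      ≤ energyBC p J Λ σstar σstar + 4 * (J + Jcrit p) * (4 * (L : ℝ)) := by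
  have part1 : ∀ σ : ℤ × ℤ → ℤ, (∀ x, σ x = 1 ∨ σ x = -1) →
      |energyBC p J Λ σ s - energyBC p J Λ σ σstar| ≤ 2 * (J + Jcrit p) * (4 * (L : ℝ)) :=
    fun σ hσ => diff_bound p J hp hJ s σstar σ hs hσstar hσ L hL Λ hΛ
  refine ⟨part1, ?_⟩
  have h1 := abs_le.1 (part1 s hs)
  have h2 := hground Λ σstar hσstar
  have h3 := abs_le.1 (part1 σstar hσstar)
  have : (4:ℝ) * (J + Jcrit p) * (4 * (L : ℝ)) = 2 * (J + Jcrit p) * (4 * (L : ℝ))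
      + 2 * (J + Jcrit p) * (4 * (L : ℝ)) := by ring
  linarith [h1.1, h1.2, h3.1, h3.2]
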